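/- arXiv:1505.07206 — 5 statements merged into one kernel-verified Lean document; each statement's English description precedes it below -/
import Mathlib

section
/- Let α > 2 and b > 0. For ξ² > 0 with b·ξ^{-4/α} ≥ 1, and channel powers σ_j² = (j/b)^{-α/2} for j ≥ 1, the total error ⌊b·ξ^{-4/α}⌋·ξ² + ∑_{j=⌊b·ξ^{-4/α}⌋+1}^{∞} (j/b)^{-α/2} is at most (bα/(α-2))·ξ^{2-4/α}·V(b·ξ^{-4/α}), where V(x) = (⌊x⌋/x)·(1 + (2/α)·((⌊x⌋/x)^{-α/2} - 1)). -/
open Real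

lemma tail_bound (α b L : ℝ) (hα : 2 < α) (hb : 0 < b) (hL : 1 ≤ L) :
    ∑' j : ℕ, (((j : ℝ) + L + 1) / b) ^ (-(α / 2)) ≤
      2 / (α - 2) * b ^ (α / 2) * L ^ (1 - α / 2) := by
  have hL0 : (0 : ℝ) < L := lt_of_lt_of_le one_pos hL
  apply Real.tsum_le_of_sum_range_le
  · intro j
    positivity
  intro n
  have key : ∀ j : ℕ, (((j : ℝ) + L + 1) / b) ^ (-(α / 2)) =
      b ^ (α / 2) * ((L + ((j : ℝ) + 1)) ^ (-(α / 2))) := by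
    intro j
    have hy : (0 : ℝ) ≤ (j : ℝ) + L + 1 := by positivity
    rw [Real.div_rpow hy hb.le, Real.rpow_neg hb.le, div_eq_mul_inv, inv_inv,
      show (j : ℝ) + L + 1 = L + ((j : ℝ) + 1) by ring]
    ring
  simp_rw [key, ← Finset.mul_sum]
  have hanti : AntitoneOn (fun t : ℝ => t ^ (-(α / 2))) (Set.Icc L (L + n)) := by
    intro x hx y hy hxy
    exact Real.rpow_le_rpow_of_nonpos (lt_of_lt_of_le hL0 hx.1) hxy (by linarith)
  have hsum := hanti.sum_le_integral (x₀ := L) (a := n)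
  have hint : (∫ x in L..(L + n), x ^ (-(α / 2))) =
      ((L + n) ^ (-(α / 2) + 1) - L ^ (-(α / 2) + 1)) / (-(α / 2) + 1) := by
    rw [integral_rpow]
    right
    refine ⟨by intro h; rw [neg_eq_iff_eq_neg] at h; linarith, ?_⟩
    rw [Set.uIcc_of_le (by linarith [Nat.cast_nonneg (α := ℝ) n])]
    intro hmem
    linarith [hmem.1]
  have hLe : ∑ i ∈ Finset.range n, (L + ((i : ℝ) + 1)) ^ (-(α / 2)) ≤
      ((L + n) ^ (-(α / 2) + 1) - L ^ (-(α / 2) + 1)) / (-(α / 2) + 1) := by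
    rw [← hint]
    convert hsum using 2 with i
    push_cast
    ring_nf
  have htail : ((L + n) ^ (-(α / 2) + 1) - L ^ (-(α / 2) + 1)) / (-(α / 2) + 1) ≤
      2 / (α - 2) * L ^ (1 - α / 2) := by
    have hne : -(α / 2) + 1 < 0 := by linarith
    rw [div_le_iff_of_neg hne]
    have hc : 2 / (α - 2) * (-(α / 2) + 1) = -1 := by
      rw [div_mul_eq_mul_div, div_eq_iff (by linarith : α - 2 ≠ 0)]
      ring
    have h1 : 2 / (α - 2) * L ^ (1 - α / 2) * (-(α / 2) + 1) = -(L ^ (1 - α / 2)) := by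
      rw [show 2 / (α - 2) * L ^ (1 - α / 2) * (-(α / 2) + 1) =
        L ^ (1 - α / 2) * (2 / (α - 2) * (-(α / 2) + 1)) by ring, hc]
      ring
    rw [h1]
    have h2 : (0 : ℝ) ≤ (L + n) ^ (-(α / 2) + 1) := by positivity
    have he : (1 : ℝ) - α / 2 = -(α / 2) + 1 := by ring
    rw [he]
    linarith
  calc b ^ (α / 2) * ∑ i ∈ Finset.range n, (L + ((i : ℝ) + 1)) ^ (-(α / 2))
      ≤ b ^ (α / 2) * (2 / (α - 2) * L ^ (1 - α / 2)) :=
        mul_le_mul_of_nonneg_left (le_trans hLe htail) (by positivity)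
    _ = 2 / (α - 2) * b ^ (α / 2) * L ^ (1 - α / 2) := by ring

theorem stmt5 (α b ξ : ℝ) (hα : 2 < α) (hb : 0 < b) (hξ : 0 < ξ)
    (h1 : 1 ≤ b * ξ ^ (-(4 / α))) :
    (⌊b * ξ ^ (-(4 / α))⌋ : ℝ) * ξ ^ 2 +
        ∑' j : ℕ, (((j : ℝ) + (⌊b * ξ ^ (-(4 / α))⌋ : ℝ) + 1) / b) ^ (-(α / 2)) ≤
      (b * α / (α - 2)) * ξ ^ (2 - 4 / α) *
        (((⌊b * ξ ^ (-(4 / α))⌋ : ℝ) / (b * ξ ^ (-(4 / α)))) *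
          (1 + (2 / α) *
            (((⌊b * ξ ^ (-(4 / α))⌋ : ℝ) / (b * ξ ^ (-(4 / α)))) ^ (-(α / 2)) - 1))) := by
  set x : ℝ := b * ξ ^ (-(4 / α)) with hx
  set L : ℝ := (⌊x⌋ : ℝ) with hLdef
  have hL1 : (1 : ℝ) ≤ L := by
    have h2 : (1 : ℤ) ≤ ⌊x⌋ := Int.le_floor.mpr (by exact_mod_cast h1)
    have h3 : ((1 : ℤ) : ℝ) ≤ ((⌊x⌋ : ℤ) : ℝ) := Int.cast_le.mpr h2
    simpa using h3
  have hL0 : (0 : ℝ) < L := lt_of_lt_of_le one_pos hL1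
  have hx0 : (0 : ℝ) < x := lt_of_lt_of_le one_pos h1
  have hα0 : (0 : ℝ) < α := by linarith
  have he0 : (0 : ℝ) < ξ ^ (-(4 / α)) := Real.rpow_pos_of_pos hξ _
  -- key rpow identities
  have hQ : x ^ (α / 2) = b ^ (α / 2) / ξ ^ 2 := by
    rw [hx, Real.mul_rpow hb.le he0.le, ← Real.rpow_mul hξ.le]
    have h4 : -(4 / α) * (α / 2) = -2 := by field_simp; ring
    rw [h4, show (-2 : ℝ) = -(2 : ℕ) by norm_num, Real.rpow_neg hξ.le,
      Real.rpow_natCast, ← div_eq_mul_inv]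
  have hA : ξ ^ (2 - 4 / α) = ξ ^ 2 * ξ ^ (-(4 / α)) := by
    rw [show (2 : ℝ) - 4 / α = (2 : ℕ) + -(4 / α) by push_cast; ring,
      Real.rpow_add hξ, Real.rpow_natCast]
  have hB : (L / x) ^ (-(α / 2)) = L ^ (-(α / 2)) * x ^ (α / 2) := by
    rw [Real.div_rpow hL0.le hx0.le, Real.rpow_neg hx0.le, div_eq_mul_inv, inv_inv]
  have hD : L ^ (1 - α / 2) = L * L ^ (-(α / 2)) := by
    rw [show (1 : ℝ) - α / 2 = 1 + -(α / 2) by ring, Real.rpow_add hL0, Real.rpow_one]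
  have hRHS : (b * α / (α - 2)) * ξ ^ (2 - 4 / α) *
      ((L / x) * (1 + (2 / α) * ((L / x) ^ (-(α / 2)) - 1))) =
      L * ξ ^ 2 + 2 / (α - 2) * b ^ (α / 2) * L ^ (1 - α / 2) := by
    rw [hB, hD, hA, hQ, hx]
    have hα2 : α - 2 ≠ 0 := by linarith
    field_simp
    ring
  rw [hRHS]
  have := tail_bound α b L hα hb hL1
  linarith
end

section
/- Let a > 0, c > 0, β > 0 and a positive random variable G with E[log₂ G] finite. Define R(ρ) = E[log₂(1 + ρG/(1 + ρ·c·ρ^{-β}·2^{-g(ρ)}))] where g(ρ) converges to a finite limit as ρ → ∞. Then lim_{ρ→∞} R(ρ)/log₂ ρ = min{1, β}. -/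
open Real MeasureTheory ProbabilityTheory Filter

lemma stmt9_aux_bound {t x : ℝ} (ht0 : 0 ≤ t) (ht1 : t ≤ 1) (hx : 0 < x) :
    |Real.logb 2 (t + x)| ≤ 1 + |Real.logb 2 x| := by
  have h2 : (1:ℝ) < 2 := one_lt_two
  rw [abs_le]
  constructor
  · have h1 : Real.logb 2 x ≤ Real.logb 2 (t + x) :=
      Real.logb_le_logb_of_le h2 hx (by linarith)
    have h3 := neg_abs_le (Real.logb 2 x)
    linarith
  · have h1 : Real.logb 2 (t + x) ≤ Real.logb 2 (2 * max 1 x) := by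
      apply Real.logb_le_logb_of_le h2 (by linarith)
      rcases le_total x 1 with h | h
      · rw [max_eq_left h]; linarith
      · rw [max_eq_right h]; linarith
    have h2' : Real.logb 2 (2 * max 1 x) = 1 + Real.logb 2 (max 1 x) := by
      rw [Real.logb_mul (by norm_num) (by positivity), Real.logb_self_eq_one h2]
    have h3 : Real.logb 2 (max 1 x) ≤ |Real.logb 2 x| := by
      rcases le_total x 1 with h | h
      · rw [max_eq_left h, Real.logb_one]; exact abs_nonneg _
      · rw [max_eq_right h]; exact le_abs_self _
    linarith

theorem stmt9 {Ω : Type*} [MeasureSpace Ω] [IsProbabilityMeasure (ℙ : Measure Ω)]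
    (a c β : ℝ) (ha : 0 < a) (hc : 0 < c) (hβ : 0 < β)
    (G : Ω → ℝ) (hGmeas : Measurable G) (hGpos : ∀ ω, 0 < G ω)
    (hGint : Integrable (fun ω => Real.logb 2 (G ω)))
    (g : ℝ → ℝ) (ginf : ℝ) (hg : Tendsto g atTop (nhds ginf)) :
    Tendsto
      (fun ρ : ℝ =>
        (∫ ω, Real.logb 2
            (1 + ρ * G ω / (1 + ρ * c * ρ ^ (-β) * (2 : ℝ) ^ (-(g ρ))))) /
          Real.logb 2 ρ)
      atTop (nhds (min 1 β)) := by
  have h2 : (1:ℝ) < 2 := one_lt_two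
  set D : ℝ → ℝ := fun ρ => 1 + ρ * c * ρ ^ (-β) * (2 : ℝ) ^ (-(g ρ)) with hDdef
  set φ : ℝ → ℝ := fun ρ => D ρ / ρ with hφdef
  -- basic facts about D
  have hD1 : ∀ ρ : ℝ, 0 < ρ → (1:ℝ) ≤ D ρ := by
    intro ρ hρ
    have : 0 ≤ ρ * c * ρ ^ (-β) * (2 : ℝ) ^ (-(g ρ)) := by positivity
    simp only [hDdef]; linarith
  have hDpos : ∀ ρ : ℝ, 0 < ρ → (0:ℝ) < D ρ := fun ρ hρ => lt_of_lt_of_le one_pos (hD1 ρ hρ)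
  -- 2 ^ (-g ρ) tends to 2 ^ (-ginf)
  have h2g : Tendsto (fun ρ => (2:ℝ) ^ (-(g ρ))) atTop (nhds ((2:ℝ) ^ (-ginf))) := by
    have hcont : ContinuousAt (fun y : ℝ => (2:ℝ) ^ y) (-ginf) :=
      Real.continuousAt_const_rpow (by norm_num)
    exact hcont.tendsto.comp hg.neg
  -- φ tends to 0
  have hφ0 : Tendsto φ atTop (nhds 0) := by
    have hψ : Tendsto (fun ρ : ℝ => ρ⁻¹ + c * ρ ^ (-β) * (2:ℝ) ^ (-(g ρ))) atTop
        (nhds (0 + c * 0 * (2:ℝ) ^ (-ginf))) := by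
      exact tendsto_inv_atTop_zero.add
        (((tendsto_const_nhds.mul (tendsto_rpow_neg_atTop hβ)).mul h2g))
    rw [show (0:ℝ) + c * 0 * (2:ℝ) ^ (-ginf) = 0 by ring] at hψ
    refine hψ.congr' ?_
    filter_upwards [eventually_gt_atTop (0:ℝ)] with ρ hρ
    simp only [hφdef, hDdef]
    field_simp
  -- logb 2 tends to atTop
  have hlogb : Tendsto (fun ρ : ℝ => Real.logb 2 ρ) atTop atTop := Real.tendsto_logb_atTop h2
  have hlogbinv : Tendsto (fun ρ : ℝ => (Real.logb 2 ρ)⁻¹) atTop (nhds 0) :=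
    hlogb.inv_tendsto_atTop
  -- measurability helper
  have hmeas : ∀ t : ℝ, Measurable (fun ω => Real.logb 2 (t + G ω)) := by
    intro t
    simp only [Real.logb]
    exact (Real.measurable_log.comp (measurable_const.add hGmeas)).div_const _
  -- the bound function
  have hBint : Integrable (fun ω => 1 + |Real.logb 2 (G ω)|) :=
    (integrable_const (1:ℝ)).add hGint.abs
  -- eventually 0 ≤ φ ρ ≤ 1
  have hφ01 : ∀ᶠ ρ in atTop, 0 ≤ φ ρ ∧ φ ρ ≤ 1 := by
    have h1 : ∀ᶠ ρ in atTop, φ ρ ≤ 1 := by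
      have := hφ0.eventually (eventually_le_nhds (by norm_num : (0:ℝ) < 1))
      exact this
    filter_upwards [h1, eventually_gt_atTop (0:ℝ)] with ρ hρ1 hρ0
    exact ⟨le_of_lt (div_pos (hDpos ρ hρ0) hρ0), hρ1⟩
  -- integrability of the shifted integrand
  have hInt : ∀ ρ : ℝ, 0 ≤ φ ρ → φ ρ ≤ 1 →
      Integrable (fun ω => Real.logb 2 (φ ρ + G ω)) := by
    intro ρ h0 h1
    refine hBint.mono ((hmeas (φ ρ)).aestronglyMeasurable) ?_
    refine ae_of_all _ fun ω => ?_
    have hb : ‖1 + |Real.logb 2 (G ω)|‖ = 1 + |Real.logb 2 (G ω)| := by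
      rw [Real.norm_eq_abs]; exact abs_of_nonneg (by positivity)
    rw [Real.norm_eq_abs, hb]
    exact stmt9_aux_bound h0 h1 (hGpos ω)
  -- dominated convergence
  set I : ℝ → ℝ := fun ρ => ∫ ω, Real.logb 2 (φ ρ + G ω) with hIdef
  have hIlim : Tendsto I atTop (nhds (∫ ω, Real.logb 2 (G ω))) := by
    apply tendsto_integral_filter_of_dominated_convergence
      (fun ω => 1 + |Real.logb 2 (G ω)|)
    · exact Eventually.of_forall fun ρ => (hmeas (φ ρ)).aestronglyMeasurable
    · filter_upwards [hφ01] with ρ hρ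
      refine ae_of_all _ fun ω => ?_
      rw [Real.norm_eq_abs]
      exact stmt9_aux_bound hρ.1 hρ.2 (hGpos ω)
    · exact hBint
    · refine ae_of_all _ fun ω => ?_
      have hadd : Tendsto (fun ρ => φ ρ + G ω) atTop (nhds (G ω)) := by
        simpa using hφ0.add (tendsto_const_nhds : Tendsto (fun _ : ℝ => G ω) atTop _)
      exact ((Real.continuousAt_logb (hGpos ω).ne').tendsto).comp hadd
  have hIdiv : Tendsto (fun ρ => I ρ / Real.logb 2 ρ) atTop (nhds 0) := by
    have := hIlim.mul hlogbinv
    simpa [div_eq_mul_inv] using this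
  -- the D term
  have hDdiv : Tendsto (fun ρ => Real.logb 2 (D ρ) / Real.logb 2 ρ) atTop
      (nhds (max 0 (1 - β))) := by
    by_cases hβ1 : 1 ≤ β
    · rw [max_eq_left (by linarith)]
      -- squeeze between 0 and K / logb 2 ρ
      set M : ℝ := (2:ℝ) ^ (-ginf) + 1 with hM
      have hMpos : 0 < M := by positivity
      have hgM : ∀ᶠ ρ in atTop, (2:ℝ) ^ (-(g ρ)) ≤ M := by
        have := h2g.eventually (eventually_le_nhds (by linarith : (2:ℝ) ^ (-ginf) < M))
        exact this
      set K : ℝ := Real.logb 2 (1 + c * M) with hK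
      have hupper : Tendsto (fun ρ : ℝ => K / Real.logb 2 ρ) atTop (nhds 0) := by
        have := (tendsto_const_nhds : Tendsto (fun _ : ℝ => K) atTop _).mul hlogbinv
        simpa [div_eq_mul_inv] using this
      apply tendsto_of_tendsto_of_tendsto_of_le_of_le' tendsto_const_nhds hupper
      · filter_upwards [eventually_gt_atTop (1:ℝ)] with ρ hρ
        have h0 : 0 ≤ Real.logb 2 (D ρ) := Real.logb_nonneg h2 (hD1 ρ (by linarith))
        have hl : 0 < Real.logb 2 ρ := Real.logb_pos h2 hρ
        positivity
      · filter_upwards [eventually_gt_atTop (1:ℝ), hgM] with ρ hρ hgMρ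
        have hρ0 : (0:ℝ) < ρ := by linarith
        have hl : 0 < Real.logb 2 ρ := Real.logb_pos h2 hρ
        have hDK : Real.logb 2 (D ρ) ≤ K := by
          apply Real.logb_le_logb_of_le h2 (hDpos ρ hρ0)
          have hr1 : ρ * ρ ^ (-β) ≤ 1 := by
            rw [show ρ * ρ ^ (-β) = ρ ^ (1 + -β) by
              rw [Real.rpow_add hρ0, Real.rpow_one]]
            exact Real.rpow_le_one_of_one_le_of_nonpos (le_of_lt hρ) (by linarith)
          have h2gpos : 0 < (2:ℝ) ^ (-(g ρ)) := by positivity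
          have : ρ * c * ρ ^ (-β) * (2:ℝ) ^ (-(g ρ)) ≤ c * M := by
            have e1 : ρ * c * ρ ^ (-β) * (2:ℝ) ^ (-(g ρ))
                = c * ((ρ * ρ ^ (-β)) * (2:ℝ) ^ (-(g ρ))) := by ring
            rw [e1]
            have e2 : (ρ * ρ ^ (-β)) * (2:ℝ) ^ (-(g ρ)) ≤ 1 * M := by
              apply mul_le_mul hr1 hgMρ (le_of_lt h2gpos) zero_le_one
            nlinarith [hc.le]
          simp only [hDdef]; linarith
        exact div_le_div_of_nonneg_right hDK hl.le
    · push_neg at hβ1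
      rw [max_eq_right (by linarith)]
      -- logb 2 (D ρ) = (1-β) * logb 2 ρ + logb 2 (ρ^(β-1) + c * 2^(-g ρ))
      set E : ℝ → ℝ := fun ρ => ρ ^ (β - 1) + c * (2:ℝ) ^ (-(g ρ)) with hEdef
      have hElim : Tendsto E atTop (nhds (0 + c * (2:ℝ) ^ (-ginf))) := by
        exact (tendsto_rpow_neg_atTop (by linarith : 0 < 1 - β)).congr
          (fun ρ => by rw [neg_sub]) |>.add (tendsto_const_nhds.mul h2g)
      have hEpos : (0:ℝ) < 0 + c * (2:ℝ) ^ (-ginf) := by positivity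
      have hlogE : Tendsto (fun ρ => Real.logb 2 (E ρ)) atTop
          (nhds (Real.logb 2 (0 + c * (2:ℝ) ^ (-ginf)))) :=
        ((Real.continuousAt_logb hEpos.ne').tendsto).comp hElim
      have heq : ∀ᶠ ρ in atTop, Real.logb 2 (D ρ) / Real.logb 2 ρ
          = (1 - β) + Real.logb 2 (E ρ) / Real.logb 2 ρ := by
        filter_upwards [eventually_gt_atTop (1:ℝ)] with ρ hρ
        have hρ0 : (0:ℝ) < ρ := by linarith
        have hEρpos : 0 < E ρ := by
          have : (0:ℝ) < ρ ^ (β - 1) := Real.rpow_pos_of_pos hρ0 _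
          have h2' : (0:ℝ) < (2:ℝ) ^ (-(g ρ)) := by positivity
          simp only [hEdef]; nlinarith
        have hfact : D ρ = ρ ^ (1 - β) * E ρ := by
          have e1 : ρ ^ (1 - β) * ρ ^ (β - 1) = 1 := by
            rw [← Real.rpow_add hρ0]; norm_num
          have e2 : ρ ^ (1 - β) = ρ * ρ ^ (-β) := by
            rw [show (1:ℝ) - β = 1 + -β by ring, Real.rpow_add hρ0, Real.rpow_one]
          simp only [hDdef, hEdef]
          rw [mul_add, e1, e2]
          ring
        have hl : 0 < Real.logb 2 ρ := Real.logb_pos h2 hρ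
        rw [hfact, Real.logb_mul (Real.rpow_pos_of_pos hρ0 _).ne' hEρpos.ne',
          Real.logb_rpow_eq_mul_logb_of_pos hρ0, add_div, mul_div_assoc,
          div_self hl.ne', mul_one]
      have hlim2 : Tendsto (fun ρ => (1 - β) + Real.logb 2 (E ρ) / Real.logb 2 ρ)
          atTop (nhds ((1 - β) + 0)) := by
        apply tendsto_const_nhds.add
        have := hlogE.mul hlogbinv
        simpa [div_eq_mul_inv] using this
      rw [show (1:ℝ) - β = (1 - β) + 0 by ring]
      exact hlim2.congr' (heq.mono fun ρ h => h.symm)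
  -- key eventual identity
  have key : ∀ᶠ ρ in atTop,
      (∫ ω, Real.logb 2 (1 + ρ * G ω / (1 + ρ * c * ρ ^ (-β) * (2 : ℝ) ^ (-(g ρ))))) /
        Real.logb 2 ρ
      = 1 + I ρ / Real.logb 2 ρ - Real.logb 2 (D ρ) / Real.logb 2 ρ := by
    filter_upwards [eventually_gt_atTop (1:ℝ), hφ01] with ρ hρ hφρ
    have hρ0 : (0:ℝ) < ρ := by linarith
    have hDρ : 0 < D ρ := hDpos ρ hρ0
    have hl : 0 < Real.logb 2 ρ := Real.logb_pos h2 hρ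
    have hpt : ∀ ω, Real.logb 2 (1 + ρ * G ω / (1 + ρ * c * ρ ^ (-β) * (2 : ℝ) ^ (-(g ρ))))
        = Real.logb 2 ρ - Real.logb 2 (D ρ) + Real.logb 2 (φ ρ + G ω) := by
      intro ω
      have hGω := hGpos ω
      have hφρpos : 0 < φ ρ + G ω := by
        have : 0 < φ ρ := div_pos hDρ hρ0
        linarith
      have e0 : (1 + ρ * c * ρ ^ (-β) * (2 : ℝ) ^ (-(g ρ))) = D ρ := rfl
      rw [e0]
      have e1 : 1 + ρ * G ω / D ρ = (ρ * (φ ρ + G ω)) / D ρ := by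
        simp only [hφdef]
        field_simp
      rw [e1, Real.logb_div (by positivity) hDρ.ne',
        Real.logb_mul hρ0.ne' hφρpos.ne']
      ring
    have hIρ : Integrable (fun ω => Real.logb 2 (φ ρ + G ω)) := hInt ρ hφρ.1 hφρ.2
    have hint : (∫ ω, Real.logb 2
          (1 + ρ * G ω / (1 + ρ * c * ρ ^ (-β) * (2 : ℝ) ^ (-(g ρ)))))
        = Real.logb 2 ρ - Real.logb 2 (D ρ) + I ρ := by
      rw [show (fun ω => Real.logb 2
            (1 + ρ * G ω / (1 + ρ * c * ρ ^ (-β) * (2 : ℝ) ^ (-(g ρ)))))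
          = fun ω => (Real.logb 2 ρ - Real.logb 2 (D ρ)) + Real.logb 2 (φ ρ + G ω)
          from funext hpt]
      rw [integral_add (integrable_const _) hIρ, integral_const]
      simp [hIdef]
    rw [hint]
    field_simp
    ring
  -- assemble
  have hfinal : Tendsto (fun ρ : ℝ => 1 + I ρ / Real.logb 2 ρ -
      Real.logb 2 (D ρ) / Real.logb 2 ρ) atTop (nhds (1 + 0 - max 0 (1 - β))) :=
    (tendsto_const_nhds.add hIdiv).sub hDdiv
  have hminmax : min 1 β = 1 + 0 - max 0 (1 - β) := by
    rcases le_total 1 β with h | h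
    · rw [min_eq_left h, max_eq_left (by linarith)]; ring
    · rw [min_eq_right h, max_eq_right (by linarith)]; ring
  rw [hminmax]
  exact hfinal.congr' (key.mono fun ρ h => h.symm)
end

section
/- Let α > 2, b > 0, T > 0, Q ≥ 0, and let a positive random variable G have E[log₂ G] finite. Define, for ξ ∈ (0, (1/b)^{α/4}), F(ξ) = (b·ξ^{-4/α}/(2T))·(α·log₂ e + 2Q) - (α·log₂ e)/(2T) and R(ξ) = E[log₂(1 + G/((α/(α-2))·b·ξ^{2-4/α}·c₀))] where c₀ = 1 + (2/α)(2^{α/2}-1). Then lim_{ξ→0⁺} R(ξ)/log₂ F(ξ) = α/2 - 1. -/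
open Real MeasureTheory ProbabilityTheory Filter

lemma div_div_div_aux (a b u : ℝ) (hu : u ≠ 0) : (a/u)/(b/u) = a/b := by
  rcases eq_or_ne b 0 with rb | rb
  · simp [rb]
  · field_simp

lemma logb_abs_bound {c g : ℝ} (hc : 0 < c) (hg : 0 < g) :
    |Real.logb 2 (c + g)| ≤ |Real.logb 2 g| + (1 + |Real.logb 2 c|) := by
  have h1 : Real.logb 2 g ≤ Real.logb 2 (c + g) :=
    Real.logb_le_logb_of_le one_lt_two hg (by linarith)
  have h2 : Real.logb 2 (c + g) ≤ 1 + |Real.logb 2 c| + |Real.logb 2 g| := by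
    have hm : c + g ≤ 2 * max c g := by
      rcases le_total c g with h | h
      · have := max_eq_right h; rw [this]; linarith
      · have := max_eq_left h; rw [this]; linarith
    have h3 : Real.logb 2 (c + g) ≤ Real.logb 2 (2 * max c g) :=
      Real.logb_le_logb_of_le one_lt_two (by linarith) hm
    have h4 : Real.logb 2 (2 * max c g) = 1 + Real.logb 2 (max c g) := by
      rw [Real.logb_mul two_ne_zero (by positivity)]
      simp
    have h5 : Real.logb 2 (max c g) ≤ |Real.logb 2 c| + |Real.logb 2 g| := by
      rcases max_cases c g with ⟨he, _⟩ | ⟨he, _⟩ <;> rw [he]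
      · have := le_abs_self (Real.logb 2 c); have := abs_nonneg (Real.logb 2 g); linarith
      · have := le_abs_self (Real.logb 2 g); have := abs_nonneg (Real.logb 2 c); linarith
    linarith
  rw [abs_le]
  constructor
  · have h6 := neg_abs_le (Real.logb 2 g)
    have := abs_nonneg (Real.logb 2 c)
    linarith
  · linarith

lemma aux_integrable {Ω : Type*} [MeasureSpace Ω] [IsProbabilityMeasure (ℙ : Measure Ω)]
    {G : Ω → ℝ} (hGmeas : Measurable G) (hGpos : ∀ ω, 0 < G ω)
    (hGint : Integrable (fun ω => Real.logb 2 (G ω))) {c : ℝ} (hc : 0 < c) :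
    Integrable (fun ω => Real.logb 2 (c + G ω)) := by
  have hmeas : Measurable fun ω => Real.logb 2 (c + G ω) :=
    (Real.measurable_log.comp (measurable_const.add hGmeas)).div_const _
  refine (hGint.abs.add (integrable_const (1 + |Real.logb 2 c|))).mono'
    hmeas.aestronglyMeasurable (ae_of_all _ fun ω => ?_)
  simpa [Real.norm_eq_abs] using logb_abs_bound hc (hGpos ω)

theorem stmt10 {Ω : Type*} [MeasureSpace Ω] [IsProbabilityMeasure (ℙ : Measure Ω)]
    (α b T Q : ℝ) (hα : 2 < α) (hb : 0 < b) (hT : 0 < T) (hQ : 0 ≤ Q)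
    (G : Ω → ℝ) (hGmeas : Measurable G) (hGpos : ∀ ω, 0 < G ω)
    (hGint : Integrable (fun ω => Real.logb 2 (G ω))) :
    Tendsto
      (fun ξ : ℝ =>
        (∫ ω, Real.logb 2
            (1 + G ω /
              ((α / (α - 2)) * b * ξ ^ (2 - 4 / α) *
                (1 + (2 / α) * ((2 : ℝ) ^ (α / 2) - 1))))) /
          Real.logb 2
            ((b * ξ ^ (-(4 / α)) / (2 * T)) * (α * Real.logb 2 (Real.exp 1) + 2 * Q) -
              α * Real.logb 2 (Real.exp 1) / (2 * T)))
      (nhdsWithin 0 (Set.Ioo 0 ((1 / b) ^ (α / 4)))) (nhds (α / 2 - 1)) := by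
  have hα0 : (0:ℝ) < α := by linarith
  set l := nhdsWithin (0:ℝ) (Set.Ioo 0 ((1 / b) ^ (α / 4))) with hldef
  set L : ℝ := Real.logb 2 (Real.exp 1) with hLdef
  have hLpos : 0 < L := by
    rw [hLdef, Real.logb, Real.log_exp]
    have := Real.log_pos one_lt_two
    positivity
  set p : ℝ := 2 - 4/α with hpdef
  have hp : 0 < p := by
    rw [hpdef]
    have : 4/α < 2 := by rw [div_lt_iff₀ hα0]; linarith
    linarith
  set q : ℝ := 4/α with hqdef
  have hq : 0 < q := by positivity
  have hc₀ : 0 < 1 + (2/α) * ((2:ℝ)^(α/2) - 1) := by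
    have h1 : (1:ℝ) ≤ (2:ℝ)^(α/2) := Real.one_le_rpow one_le_two (by positivity)
    have h2 : 0 ≤ (2/α) * ((2:ℝ)^(α/2) - 1) := by
      apply mul_nonneg (by positivity); linarith
    linarith
  set C : ℝ := α/(α-2) * b * (1 + (2/α) * ((2:ℝ)^(α/2) - 1)) with hCdef
  have hC : 0 < C := by
    rw [hCdef]
    have : 0 < α - 2 := by linarith
    positivity
  set A : ℝ := b/(2*T) * (α*L + 2*Q) with hAdef
  have hA : 0 < A := by rw [hAdef]; positivity
  set B : ℝ := α*L/(2*T) with hBdef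
  have hB : 0 < B := by rw [hBdef]; positivity
  -- eventual facts
  have hl_le : l ≤ nhdsWithin (0:ℝ) (Set.Ioi 0) :=
    nhdsWithin_mono _ Set.Ioo_subset_Ioi_self
  have hev0 : ∀ᶠ ξ in l, 0 < ξ := by
    filter_upwards [self_mem_nhdsWithin] with ξ hξ
    exact hξ.1
  have hev1 : ∀ᶠ ξ in l, ξ < 1 := by
    have : ∀ᶠ ξ in nhds (0:ℝ), ξ < 1 := eventually_lt_nhds (by norm_num)
    exact (nhdsWithin_le_nhds : l ≤ nhds 0) this
  have hrtend : Tendsto (fun ξ : ℝ => B * ξ ^ q) l (nhds 0) := by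
    have hc : ContinuousAt (fun x : ℝ => x ^ q) 0 :=
      Real.continuousAt_rpow_const 0 q (Or.inr hq.le)
    have h := (hc.tendsto.mono_left (nhdsWithin_le_nhds : l ≤ nhds 0)).const_mul B
    rwa [Real.zero_rpow hq.ne', mul_zero] at h
  have hevB : ∀ᶠ ξ in l, B * ξ ^ q < A := hrtend.eventually_lt_const hA
  -- u tends to atTop
  have hu : Tendsto (fun ξ : ℝ => -Real.logb 2 ξ) l atTop := by
    have h1 : Tendsto Real.log l atBot :=
      Real.tendsto_log_nhdsGT_zero.mono_left hl_le
    have h2 : Tendsto (fun ξ : ℝ => Real.logb 2 ξ) l atBot := by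
      have := h1.atBot_div_const (Real.log_pos one_lt_two)
      exact this
    exact tendsto_neg_atBot_atTop.comp h2
  have hupos : ∀ᶠ ξ in l, 0 < -Real.logb 2 ξ := hu.eventually_gt_atTop 0
  -- the integral function
  set I : ℝ → ℝ := fun ξ => ∫ ω, Real.logb 2 (C * ξ ^ p + G ω) with hIdef
  set M : ℝ := ∫ ω, (|Real.logb 2 (G ω)| + |Real.logb 2 (C + G ω)|) with hMdef
  have hCGint : Integrable (fun ω => Real.logb 2 (C + G ω)) :=
    aux_integrable hGmeas hGpos hGint hC
  have hIbound : ∀ᶠ ξ in l, |I ξ| ≤ M := by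
    filter_upwards [hev0, hev1] with ξ hξ0 hξ1
    have hξp : 0 < ξ ^ p := Real.rpow_pos_of_pos hξ0 p
    have hξple : ξ ^ p ≤ 1 := (Real.rpow_le_one hξ0.le hξ1.le hp.le)
    have hcp : 0 < C * ξ ^ p := by positivity
    have hcple : C * ξ ^ p ≤ C := by nlinarith
    have hfint : Integrable (fun ω => Real.logb 2 (C * ξ ^ p + G ω)) :=
      aux_integrable hGmeas hGpos hGint hcp
    have hbd : ∀ ω, |Real.logb 2 (C * ξ ^ p + G ω)| ≤
        |Real.logb 2 (G ω)| + |Real.logb 2 (C + G ω)| := by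
      intro ω
      have hG := hGpos ω
      have hlo : Real.logb 2 (G ω) ≤ Real.logb 2 (C * ξ ^ p + G ω) :=
        Real.logb_le_logb_of_le one_lt_two hG (by linarith)
      have hhi : Real.logb 2 (C * ξ ^ p + G ω) ≤ Real.logb 2 (C + G ω) :=
        Real.logb_le_logb_of_le one_lt_two (by linarith) (by linarith)
      rw [abs_le]
      constructor
      · have := neg_abs_le (Real.logb 2 (G ω))
        have := abs_nonneg (Real.logb 2 (C + G ω))
        linarith
      · have := le_abs_self (Real.logb 2 (C + G ω))
        have := abs_nonneg (Real.logb 2 (G ω))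
        linarith
    calc |I ξ| ≤ ∫ ω, |Real.logb 2 (C * ξ ^ p + G ω)| := by
          simpa [hIdef, Real.norm_eq_abs] using
            norm_integral_le_integral_norm (fun ω => Real.logb 2 (C * ξ ^ p + G ω))
      _ ≤ M := by
          rw [hMdef]
          exact integral_mono hfint.abs (hGint.abs.add hCGint.abs) hbd
  -- component limits
  have T1 : Tendsto (fun ξ => (I ξ - Real.logb 2 C) / (-Real.logb 2 ξ)) l (nhds 0) := by
    apply squeeze_zero_norm' (a := fun ξ => (M + |Real.logb 2 C|) * (-Real.logb 2 ξ)⁻¹)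
    · filter_upwards [hIbound, hupos] with ξ hM hup
      rw [Real.norm_eq_abs, abs_div, abs_of_pos hup, div_eq_mul_inv]
      have h1 : |I ξ - Real.logb 2 C| ≤ M + |Real.logb 2 C| := by
        have := abs_sub_abs_le_abs_sub (I ξ) (Real.logb 2 C)
        have := abs_sub (I ξ) (Real.logb 2 C)
        calc |I ξ - Real.logb 2 C| ≤ |I ξ| + |Real.logb 2 C| := abs_sub _ _
          _ ≤ M + |Real.logb 2 C| := by linarith
      exact mul_le_mul_of_nonneg_right h1 (by positivity)
    · have := hu.inv_tendsto_atTop.const_mul (M + |Real.logb 2 C|)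
      simpa using this
  have T2 : Tendsto (fun ξ => Real.logb 2 (A - B * ξ ^ q) / (-Real.logb 2 ξ)) l (nhds 0) := by
    have hnum : Tendsto (fun ξ => Real.logb 2 (A - B * ξ ^ q)) l (nhds (Real.logb 2 A)) := by
      have h1 : Tendsto (fun ξ : ℝ => A - B * ξ ^ q) l (nhds A) := by
        have := (tendsto_const_nhds : Tendsto (fun _ : ℝ => A) l (nhds A)).sub hrtend
        simpa using this
      have hc : ContinuousAt (fun x : ℝ => Real.logb 2 x) A :=
        (Real.continuousAt_log hA.ne').div_const _
      exact hc.tendsto.comp h1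
    exact hnum.div_atTop hu
  -- the rewritten function tends to p/q
  have hpq : p / q = α / 2 - 1 := by
    rw [hpdef, hqdef]
    field_simp
    ring
  have hmain : Tendsto
      (fun ξ => ((I ξ - Real.logb 2 C) / (-Real.logb 2 ξ) + p) /
        (Real.logb 2 (A - B * ξ ^ q) / (-Real.logb 2 ξ) + q)) l (nhds (α / 2 - 1)) := by
    have := (T1.add (tendsto_const_nhds (x := p))).div
      (T2.add (tendsto_const_nhds (x := q))) (by simpa using hq.ne')
    simp only [zero_add, hpq] at this
    exact this
  refine hmain.congr' ?_
  filter_upwards [hev0, hev1, hevB, hupos] with ξ hξ0 hξ1 hBA hup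
  have hξp : 0 < ξ ^ p := Real.rpow_pos_of_pos hξ0 p
  have hξq : 0 < ξ ^ q := Real.rpow_pos_of_pos hξ0 q
  have hcp : 0 < C * ξ ^ p := by positivity
  have hlogξp : Real.logb 2 (ξ ^ p) = p * Real.logb 2 ξ := by
    rw [Real.logb, Real.log_rpow hξ0, Real.logb, mul_div_assoc]
  have hlogξq : Real.logb 2 (ξ ^ q) = q * Real.logb 2 ξ := by
    rw [Real.logb, Real.log_rpow hξ0, Real.logb, mul_div_assoc]
  have hu0 : -Real.logb 2 ξ ≠ 0 := ne_of_gt hup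
  -- numerator
  have hnum_eq : (∫ ω, Real.logb 2
        (1 + G ω / ((α / (α - 2)) * b * ξ ^ (2 - 4 / α) *
          (1 + (2 / α) * ((2 : ℝ) ^ (α / 2) - 1))))) =
      (I ξ - Real.logb 2 C) + p * (-Real.logb 2 ξ) := by
    have hdeq : (α / (α - 2)) * b * ξ ^ (2 - 4 / α) *
        (1 + (2 / α) * ((2 : ℝ) ^ (α / 2) - 1)) = C * ξ ^ p := by
      rw [hCdef, hpdef, hqdef]; ring
    have hpt : ∀ ω, Real.logb 2
        (1 + G ω / ((α / (α - 2)) * b * ξ ^ (2 - 4 / α) *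
          (1 + (2 / α) * ((2 : ℝ) ^ (α / 2) - 1)))) =
        Real.logb 2 (C * ξ ^ p + G ω) - (Real.logb 2 C + p * Real.logb 2 ξ) := by
      intro ω
      have hG := hGpos ω
      rw [hdeq]
      have h1 : 1 + G ω / (C * ξ ^ p) = (C * ξ ^ p + G ω) / (C * ξ ^ p) := by
        field_simp
      rw [h1, Real.logb_div (by positivity) hcp.ne',
        Real.logb_mul hC.ne' hξp.ne', hlogξp]
    have hfint : Integrable (fun ω => Real.logb 2 (C * ξ ^ p + G ω)) :=
      aux_integrable hGmeas hGpos hGint hcp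
    calc (∫ ω, Real.logb 2
        (1 + G ω / ((α / (α - 2)) * b * ξ ^ (2 - 4 / α) *
          (1 + (2 / α) * ((2 : ℝ) ^ (α / 2) - 1)))))
        = ∫ ω, (Real.logb 2 (C * ξ ^ p + G ω) -
            (Real.logb 2 C + p * Real.logb 2 ξ)) := by
          exact integral_congr_ae (ae_of_all _ hpt)
      _ = (∫ ω, Real.logb 2 (C * ξ ^ p + G ω)) -
            (Real.logb 2 C + p * Real.logb 2 ξ) := by
          rw [integral_sub hfint (integrable_const _), integral_const]
          simp
      _ = (I ξ - Real.logb 2 C) + p * (-Real.logb 2 ξ) := by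
          rw [hIdef]; ring
  -- denominator
  have hden_eq : Real.logb 2
      ((b * ξ ^ (-(4 / α)) / (2 * T)) * (α * Real.logb 2 (Real.exp 1) + 2 * Q) -
        α * Real.logb 2 (Real.exp 1) / (2 * T)) =
      Real.logb 2 (A - B * ξ ^ q) + q * (-Real.logb 2 ξ) := by
    have h0 : (b * ξ ^ (-(4 / α)) / (2 * T)) * (α * Real.logb 2 (Real.exp 1) + 2 * Q) -
        α * Real.logb 2 (Real.exp 1) / (2 * T) = (A - B * ξ ^ q) / ξ ^ q := by
      rw [hAdef, hBdef, hLdef, hqdef, Real.rpow_neg hξ0.le]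
      have hξq' : ξ ^ (4/α) ≠ 0 := by
        rw [← hqdef]; exact hξq.ne'
      field_simp
    rw [h0, Real.logb_div (by linarith) hξq.ne', hlogξq]
    ring
  rw [hnum_eq, hden_eq]
  rw [← div_div_div_aux ((I ξ - Real.logb 2 C) + p * (-Real.logb 2 ξ))
    (Real.logb 2 (A - B * ξ ^ q) + q * (-Real.logb 2 ξ)) (-Real.logb 2 ξ) hu0]
  have h1 : (I ξ - Real.logb 2 C + p * -Real.logb 2 ξ) / (-Real.logb 2 ξ) =
      (I ξ - Real.logb 2 C) / (-Real.logb 2 ξ) + p := by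
    have hl0 : Real.logb 2 ξ ≠ 0 := fun h => hu0 (by rw [h]; ring)
    field_simp
    ring
  have h2 : (Real.logb 2 (A - B * ξ ^ q) + q * -Real.logb 2 ξ) / (-Real.logb 2 ξ) =
      Real.logb 2 (A - B * ξ ^ q) / (-Real.logb 2 ξ) + q := by
    have hl0 : Real.logb 2 ξ ≠ 0 := fun h => hu0 (by rw [h]; ring)
    field_simp
    ring
  rw [h1, h2]
end

section
/- Let α > 2, b ≥ 1, T > 0, Q ≥ 0. For ξ ∈ (0,1] with L := ⌊b·ξ^{-4/α}⌋ ≥ 1 and σ_j² = (j/b)^{-α/2}, the total feedback rate ∑_{j=1}^{L} (1/T)·(Q + log₂(σ_j²/ξ²)) is bounded above by (α·log₂ e/(2T))·(b·ξ^{-4/α} - 1) + (b·ξ^{-4/α}·Q)/T. -/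
open Real

lemma sumlog_aux (L : ℕ) (hL : 1 ≤ L) :
    (L : ℝ) * Real.log L - L + 1 ≤ ∑ j ∈ Finset.Icc 1 L, Real.log j := by
  induction L, hL using Nat.le_induction with
  | base => simp
  | succ n hn ih =>
    rw [Finset.sum_Icc_succ_top (by omega)]
    have hn0 : (0:ℝ) < n := by exact_mod_cast hn
    have h2 : Real.log (((n:ℝ)+1)/n) = Real.log ((n:ℝ)+1) - Real.log n :=
      Real.log_div (by positivity) (by positivity)
    have h1 : Real.log (((n:ℝ)+1)/n) ≤ ((n:ℝ)+1)/n - 1 :=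
      Real.log_le_sub_one_of_pos (by positivity)
    have h5 : (n:ℝ) * (Real.log ((n:ℝ)+1) - Real.log n) ≤ 1 := by
      rw [← h2]
      calc (n:ℝ) * Real.log (((n:ℝ)+1)/n) ≤ n * (((n:ℝ)+1)/n - 1) :=
            mul_le_mul_of_nonneg_left h1 hn0.le
        _ = 1 := by field_simp; ring
    push_cast
    push_cast at ih
    nlinarith [ih, h5]

theorem stmt16 (α b T Q ξ : ℝ) (hα : 2 < α) (hb : 1 ≤ b) (hT : 0 < T) (hQ : 0 ≤ Q)
    (hξ0 : 0 < ξ) (hξ1 : ξ ≤ 1) (hL : 1 ≤ ⌊b * ξ ^ (-(4 / α))⌋₊) :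
    ∑ j ∈ Finset.Icc 1 ⌊b * ξ ^ (-(4 / α))⌋₊,
        (1 / T) * (Q + Real.logb 2 ((((j : ℝ) / b) ^ (-(α / 2))) / ξ ^ 2)) ≤
      (α * Real.logb 2 (Real.exp 1) / (2 * T)) * (b * ξ ^ (-(4 / α)) - 1) +
        b * ξ ^ (-(4 / α)) * Q / T := by
  set x := b * ξ ^ (-(4 / α)) with hxdef
  set L := ⌊x⌋₊ with hLdef
  have hb0 : (0:ℝ) < b := lt_of_lt_of_le one_pos hb
  have hx0 : (0:ℝ) < x := by rw [hxdef]; positivity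
  have hLx : (L:ℝ) ≤ x := Nat.floor_le hx0.le
  have hL0 : (0:ℝ) < L := by exact_mod_cast hL
  have hlog2 : (0:ℝ) < Real.log 2 := Real.log_pos one_lt_two
  have hα0 : (0:ℝ) < α := by linarith
  have hcard : (Finset.Icc 1 L).card = L := by rw [Nat.card_Icc]; omega
  have key : ∑ j ∈ Finset.Icc 1 L, (Real.log x - Real.log j) ≤ x - 1 := by
    rw [Finset.sum_sub_distrib, Finset.sum_const, hcard, nsmul_eq_mul]
    have h1 := sumlog_aux L hL
    have h2 : Real.log (x / L) ≤ x / L - 1 :=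
      Real.log_le_sub_one_of_pos (by positivity)
    have h3 : Real.log (x / L) = Real.log x - Real.log L :=
      Real.log_div hx0.ne' hL0.ne'
    have h5 : (L:ℝ) * (Real.log x - Real.log L) ≤ x - L := by
      rw [← h3]
      calc (L:ℝ) * Real.log (x / L) ≤ L * (x / L - 1) :=
            mul_le_mul_of_nonneg_left h2 hL0.le
        _ = x - L := by field_simp
    nlinarith [h1, h5]
  have hterm : ∀ j ∈ Finset.Icc 1 L,
      (1 / T) * (Q + Real.logb 2 ((((j : ℝ) / b) ^ (-(α / 2))) / ξ ^ 2)) =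
      (1 / T) * Q + (α / (2 * T * Real.log 2)) * (Real.log x - Real.log j) := by
    intro j hj
    have hj1 : 1 ≤ j := (Finset.mem_Icc.mp hj).1
    have hj0 : (0:ℝ) < j := by exact_mod_cast hj1
    have hlx : Real.log x = Real.log b + (-(4 / α)) * Real.log ξ := by
      rw [hxdef, Real.log_mul hb0.ne' (by positivity), Real.log_rpow hξ0]
    rw [Real.logb, Real.log_div (by positivity : (0:ℝ) < ((j:ℝ)/b) ^ (-(α/2))).ne'
        (by positivity : (0:ℝ) < ξ ^ 2).ne',
      Real.log_rpow (by positivity), Real.log_div hj0.ne' hb0.ne', Real.log_pow, hlx]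
    have hξl : Real.log ξ ≤ 0 := Real.log_nonpos hξ0.le hξ1
    field_simp
    ring
  rw [Finset.sum_congr rfl hterm, Finset.sum_add_distrib, Finset.sum_const, hcard,
    nsmul_eq_mul, ← Finset.mul_sum]
  have hA : (L:ℝ) * ((1 / T) * Q) ≤ x * Q / T := by
    have h := mul_le_mul_of_nonneg_right hLx hQ
    have hT' : (0:ℝ) < 1 / T := by positivity
    calc (L:ℝ) * ((1 / T) * Q) = ((L:ℝ) * Q) * (1/T) := by ring
      _ ≤ (x * Q) * (1/T) := mul_le_mul_of_nonneg_right h hT'.le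
      _ = x * Q / T := by ring
  have hc : (0:ℝ) ≤ α / (2 * T * Real.log 2) := by positivity
  have hB := mul_le_mul_of_nonneg_left key hc
  have he : Real.logb 2 (Real.exp 1) = 1 / Real.log 2 := by
    rw [Real.logb, Real.log_exp]
  rw [he]
  have hrhs : α * (1 / Real.log 2) / (2 * T) * (x - 1) + x * Q / T =
      α / (2 * T * Real.log 2) * (x - 1) + x * Q / T := by
    field_simp
  rw [hrhs]
  linarith [hA, hB]
end

section
/- Let f(ρ) = E[log₂(1 + ρG/(1 + ρ·c·2^{-βT·ρ'}))] where ρ' = log₂ ρ, G > 0 is a positive random variable with E[log₂ G] finite, c > 0, β ≥ 1/T, T > 0. Then lim_{ρ→∞} f(ρ) - log₂ ρ exists in [-∞,∞) and is > -∞; in particular lim_{ρ→∞} f(ρ)/log₂ ρ = 1. -/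
open Real MeasureTheory ProbabilityTheory Filter

theorem stmt19 {Ω : Type*} [MeasureSpace Ω] [IsProbabilityMeasure (ℙ : Measure Ω)]
    (c β T : ℝ) (hc : 0 < c) (hT : 0 < T) (hβ : 1 / T ≤ β)
    (G : Ω → ℝ) (hGmeas : Measurable G) (hGpos : ∀ ω, 0 < G ω)
    (hGint : Integrable (fun ω => Real.logb 2 (G ω))) :
    (∃ Lv : ℝ,
      Tendsto
        (fun ρ : ℝ =>
          (∫ ω, Real.logb 2
              (1 + ρ * G ω / (1 + ρ * c * (2 : ℝ) ^ (-(β * T * Real.logb 2 ρ))))) -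
            Real.logb 2 ρ) atTop (nhds Lv)) ∧
    Tendsto
      (fun ρ : ℝ =>
        (∫ ω, Real.logb 2
            (1 + ρ * G ω / (1 + ρ * c * (2 : ℝ) ^ (-(β * T * Real.logb 2 ρ))))) /
          Real.logb 2 ρ) atTop (nhds 1) := by
  have ht : 1 ≤ β * T := by
    have := mul_le_mul_of_nonneg_right hβ hT.le
    rwa [one_div, inv_mul_cancel₀ hT.ne'] at this
  set t := β * T with ht_def
  set D : ℝ → ℝ := fun ρ => 1 + ρ * c * (2 : ℝ) ^ (-(t * Real.logb 2 ρ)) with hD_def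
  have hDeq : ∀ ρ : ℝ, 1 ≤ ρ → D ρ = 1 + c * ρ ^ (1 - t) := by
    intro ρ hρ
    have hρ0 : (0:ℝ) < ρ := lt_of_lt_of_le one_pos hρ
    have h2 : (2:ℝ) ^ (-(t * Real.logb 2 ρ)) = ρ ^ (-t) := by
      rw [show -(t * Real.logb 2 ρ) = Real.logb 2 ρ * (-t) by ring,
        Real.rpow_mul (by norm_num : (0:ℝ) ≤ 2),
        Real.rpow_logb (by norm_num) (by norm_num) hρ0]
    rw [hD_def]
    dsimp only
    rw [h2, show ρ * c * ρ ^ (-t) = c * (ρ ^ (1:ℝ) * ρ ^ (-t)) by rw [Real.rpow_one]; ring,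
      ← Real.rpow_add hρ0, show (1:ℝ) + -t = 1 - t by ring]
  obtain ⟨d, hd1, hDlim⟩ : ∃ d : ℝ, 1 ≤ d ∧ Tendsto D atTop (nhds d) := by
    by_cases hcase : t = 1
    · refine ⟨1 + c, by linarith, ?_⟩
      have heq : ∀ᶠ ρ : ℝ in atTop, (1 + c : ℝ) = D ρ := by
        filter_upwards [eventually_ge_atTop (1:ℝ)] with ρ hρ
        rw [hDeq ρ hρ, hcase]
        norm_num
      exact Filter.Tendsto.congr' heq tendsto_const_nhds
    · have hcase' : 1 < t := lt_of_le_of_ne ht (Ne.symm hcase)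
      refine ⟨1, le_refl _, ?_⟩
      have hlim0 : Tendsto (fun ρ : ℝ => ρ ^ (1 - t)) atTop (nhds 0) := by
        have := tendsto_rpow_neg_atTop (by linarith : (0:ℝ) < t - 1)
        simpa [neg_sub] using this
      have h2 : Tendsto (fun ρ : ℝ => 1 + c * ρ ^ (1 - t)) atTop (nhds (1 + c * 0)) :=
        tendsto_const_nhds.add (hlim0.const_mul c)
      simp only [mul_zero, add_zero] at h2
      refine Filter.Tendsto.congr' ?_ h2
      filter_upwards [eventually_ge_atTop (1:ℝ)] with ρ hρ
      exact (hDeq ρ hρ).symm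
  have hd0 : (0:ℝ) < d := lt_of_lt_of_le one_pos hd1
  have hDpos : ∀ ρ : ℝ, 1 ≤ ρ → 1 ≤ D ρ ∧ D ρ ≤ 1 + c := by
    intro ρ hρ
    have hρ0 : (0:ℝ) < ρ := lt_of_lt_of_le one_pos hρ
    rw [hDeq ρ hρ]
    have h1 : 0 < ρ ^ (1 - t) := Real.rpow_pos_of_pos hρ0 _
    have h2 : ρ ^ (1 - t) ≤ 1 := Real.rpow_le_one_of_one_le_of_nonpos hρ (by linarith)
    constructor
    · nlinarith
    · nlinarith
  have hlogbmeas : Measurable fun x : ℝ => Real.logb 2 x := by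
    simpa [Real.logb] using Real.measurable_log.div_const (Real.log 2)
  set h : ℝ → Ω → ℝ := fun ρ ω => Real.logb 2 (ρ⁻¹ + G ω / D ρ) with hh_def
  have hmeas : ∀ ρ : ℝ, AEStronglyMeasurable (h ρ) ℙ := fun ρ =>
    (hlogbmeas.comp ((hGmeas.div_const _).const_add _)).aestronglyMeasurable
  set B : Ω → ℝ := fun ω => (1 + Real.logb 2 (1 + c)) + 2 * |Real.logb 2 (G ω)| with hB_def
  have hBint : Integrable B := (integrable_const _).add ((hGint.abs).const_mul 2)
  have hlogb_mono : ∀ x y : ℝ, 0 < x → x ≤ y → Real.logb 2 x ≤ Real.logb 2 y := by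
    intro x y hx hxy
    simp only [Real.logb]
    have := Real.log_le_log hx hxy
    have hl2 : (0:ℝ) < Real.log 2 := Real.log_pos (by norm_num)
    exact div_le_div_of_nonneg_right this hl2.le
  have hlogbc : (0:ℝ) ≤ Real.logb 2 (1 + c) := Real.logb_nonneg (by norm_num) (by linarith)
  have hbound : ∀ ρ : ℝ, 1 ≤ ρ → ∀ ω, |h ρ ω| ≤ B ω := by
    intro ρ hρ ω
    have hρ0 : (0:ℝ) < ρ := lt_of_lt_of_le one_pos hρ
    obtain ⟨hD1, hDc⟩ := hDpos ρ hρ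
    have hD0 : (0:ℝ) < D ρ := lt_of_lt_of_le one_pos hD1
    have hG := hGpos ω
    have hx0 : 0 < ρ⁻¹ + G ω / D ρ := by positivity
    have hlo : G ω / (1 + c) ≤ ρ⁻¹ + G ω / D ρ := by
      have h1 : G ω / (1 + c) ≤ G ω / D ρ := by gcongr
      have h2 : (0:ℝ) ≤ ρ⁻¹ := by positivity
      linarith
    have hhi : ρ⁻¹ + G ω / D ρ ≤ 1 + G ω := by
      have h1 : ρ⁻¹ ≤ 1 := by
        rw [inv_le_one_iff₀]; right; exact hρ
      have h2 : G ω / D ρ ≤ G ω := div_le_self hG.le hD1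
      linarith
    have hup : Real.logb 2 (ρ⁻¹ + G ω / D ρ) ≤ 1 + |Real.logb 2 (G ω)| := by
      have hmax : (1:ℝ) + G ω ≤ 2 * max 1 (G ω) := by
        rcases le_total (G ω) 1 with hl | hl
        · rw [max_eq_left hl]; linarith
        · rw [max_eq_right hl]; linarith
      have hmax0 : (0:ℝ) < max 1 (G ω) := lt_of_lt_of_le one_pos (le_max_left _ _)
      have hstep : Real.logb 2 (ρ⁻¹ + G ω / D ρ) ≤ Real.logb 2 (2 * max 1 (G ω)) :=
        hlogb_mono _ _ hx0 (le_trans hhi hmax)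
      have heq : Real.logb 2 (2 * max 1 (G ω)) = 1 + Real.logb 2 (max 1 (G ω)) := by
        rw [Real.logb_mul (by norm_num) (ne_of_gt hmax0), Real.logb_self_eq_one (by norm_num : (1:ℝ) < 2)]
      have hle : Real.logb 2 (max 1 (G ω)) ≤ |Real.logb 2 (G ω)| := by
        rcases le_total (G ω) 1 with hl | hl
        · rw [max_eq_left hl]; simp [abs_nonneg]
        · rw [max_eq_right hl]; exact le_abs_self _
      linarith
    have hdown : Real.logb 2 (G ω) - Real.logb 2 (1 + c) ≤ Real.logb 2 (ρ⁻¹ + G ω / D ρ) := by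
      have := hlogb_mono _ _ (by positivity : (0:ℝ) < G ω / (1 + c)) hlo
      rwa [Real.logb_div (ne_of_gt hG) (by positivity)] at this
    rw [hh_def]
    dsimp only
    rw [abs_le]
    constructor
    · have habs : -|Real.logb 2 (G ω)| ≤ Real.logb 2 (G ω) := neg_abs_le _
      have habs2 : (0:ℝ) ≤ |Real.logb 2 (G ω)| := abs_nonneg _
      rw [hB_def]; dsimp only
      linarith
    · rw [hB_def]; dsimp only
      have habs : (0:ℝ) ≤ |Real.logb 2 (G ω)| := abs_nonneg _
      linarith
  have hlim : ∀ ω, Tendsto (fun ρ => h ρ ω) atTop (nhds (Real.logb 2 (G ω / d))) := by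
    intro ω
    have hG := hGpos ω
    have hx : Tendsto (fun ρ : ℝ => ρ⁻¹ + G ω / D ρ) atTop (nhds (0 + G ω / d)) :=
      tendsto_inv_atTop_zero.add (tendsto_const_nhds.div hDlim (ne_of_gt hd0))
    rw [zero_add] at hx
    have hcont : ContinuousAt (fun x : ℝ => Real.logb 2 x) (G ω / d) := by
      simp only [Real.logb]
      exact (Real.continuousAt_log (by positivity)).div_const _
    exact (hcont.tendsto.comp hx :)
  set Lv : ℝ := ∫ ω, Real.logb 2 (G ω / d) with hLv
  have hdct : Tendsto (fun ρ => ∫ ω, h ρ ω) atTop (nhds Lv) := by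
    apply tendsto_integral_filter_of_dominated_convergence B
    · exact Eventually.of_forall fun ρ => hmeas ρ
    · filter_upwards [eventually_ge_atTop (1:ℝ)] with ρ hρ
      exact Eventually.of_forall fun ω => by
        rw [Real.norm_eq_abs]; exact hbound ρ hρ ω
    · exact hBint
    · exact Eventually.of_forall fun ω => hlim ω
  have hint : ∀ ρ : ℝ, 1 ≤ ρ → Integrable (h ρ) := fun ρ hρ =>
    hBint.mono (hmeas ρ) (Eventually.of_forall fun ω => by
      rw [Real.norm_eq_abs, Real.norm_eq_abs]
      exact (hbound ρ hρ ω).trans (le_abs_self _))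
  have E1 : (fun ρ : ℝ => (∫ ω, Real.logb 2 (1 + ρ * G ω / D ρ)) - Real.logb 2 ρ)
      =ᶠ[atTop] fun ρ => ∫ ω, h ρ ω := by
    filter_upwards [eventually_ge_atTop (1:ℝ)] with ρ hρ
    have hρ0 : (0:ℝ) < ρ := lt_of_lt_of_le one_pos hρ
    have hD0 : (0:ℝ) < D ρ := lt_of_lt_of_le one_pos (hDpos ρ hρ).1
    have hgeq : ∀ ω, Real.logb 2 (1 + ρ * G ω / D ρ) = h ρ ω + Real.logb 2 ρ := by
      intro ω
      have hG := hGpos ω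
      have hx0 : 0 < ρ⁻¹ + G ω / D ρ := by positivity
      have hsplit : 1 + ρ * G ω / D ρ = ρ * (ρ⁻¹ + G ω / D ρ) := by
        field_simp
      rw [hsplit, Real.logb_mul (ne_of_gt hρ0) (ne_of_gt hx0), hh_def]
      ring
    rw [show (∫ ω, Real.logb 2 (1 + ρ * G ω / D ρ)) = ∫ ω, (h ρ ω + Real.logb 2 ρ) from
      integral_congr_ae (Eventually.of_forall hgeq),
      integral_add (hint ρ hρ) (integrable_const _), integral_const]
    simp
  have main : Tendsto (fun ρ : ℝ =>
      (∫ ω, Real.logb 2 (1 + ρ * G ω / D ρ)) - Real.logb 2 ρ) atTop (nhds Lv) :=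
    Filter.Tendsto.congr' E1.symm hdct
  refine ⟨⟨Lv, main⟩, ?_⟩
  have hlogtop : Tendsto (fun ρ : ℝ => Real.logb 2 ρ) atTop atTop :=
    Real.tendsto_logb_atTop (by norm_num)
  have h0 : Tendsto (fun ρ : ℝ =>
      ((∫ ω, Real.logb 2 (1 + ρ * G ω / D ρ)) - Real.logb 2 ρ) / Real.logb 2 ρ)
      atTop (nhds 0) := main.div_atTop hlogtop
  have h1 : Tendsto (fun ρ : ℝ =>
      ((∫ ω, Real.logb 2 (1 + ρ * G ω / D ρ)) - Real.logb 2 ρ) / Real.logb 2 ρ + 1)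
      atTop (nhds (0 + 1)) := h0.add tendsto_const_nhds
  rw [zero_add] at h1
  refine Filter.Tendsto.congr' ?_ h1
  filter_upwards [eventually_ge_atTop (2:ℝ)] with ρ hρ
  have hl : Real.logb 2 ρ ≠ 0 :=
    ne_of_gt (Real.logb_pos (by norm_num) (by linarith))
  rw [sub_div, div_self hl, sub_add_cancel]
end
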